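/- (Improved Branching Lemma, algebraic form.) Let G be a simple graph on a finite index set ι, let μ : ι → ℝ satisfy 0 < μ i for all i, and define x i = μ i / (μ i + 1). Let T be a finite rooted tree with vertex set W, root r, and children function ch : W → Finset W, equipped with labels ℓ : W → ι such that: (i) for each v ∈ W, the function ℓ is injective on ch(v); (ii) every child u ∈ ch(v) satisfies ℓ(u) ∈ Γ̄(ℓ(v)); and (iii) for each v ∈ W, the label set ℓ(ch(v)) is an independent set in G. For v ∈ W and I ⊆ Γ̄(ℓ v), write w_v(I) = (∏_{j ∈ I} x j) · (∏_{B ∈ Γ̄(ℓ v) ∖ I} (1 − x B)). Then ∏_{v ∈ W} [ w_v(ℓ(ch(v))) / (∑_{I ⊆ Γ̄(ℓ v), I independent in G} w_v(I)) ] = (μ(ℓ r))⁻¹ · ∏_{v ∈ W} [ μ(ℓ v) / (∑_{I ⊆ Γ̄(ℓ v), I independent in G} ∏_{j ∈ I} μ j) ]. (The left-hand side is the probability that the modified branching process with rejection sampling of non-independent child sets produces exactly the tree T.) -/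

import Mathlib

open Finset

/-- **Improved Branching Lemma (algebraic form).** For a finite rooted tree
`(W, r, p)` with children function `ch`, labelled by `ℓ : W → ι` so that
children of a common vertex get distinct labels lying in the closed
neighborhood of their parent's label and forming an independent set of `G`,
the probability that the modified branching process (with rejection sampling of
non-independent child sets) produces exactly this tree equals
`(μ (ℓ r))⁻¹ * ∏_v (μ (ℓ v) / ∑_{I ⊆ Γ̄(ℓ v), I indep.} ∏_{j ∈ I} μ j)`,
where `x i = μ i / (μ i + 1)` and for `I ⊆ Γ̄(ℓ v)` the weight is
`w_v(I) = (∏_{j ∈ I} x j) * (∏_{B ∈ Γ̄(ℓ v) ∖ I} (1 - x B))`. -/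
theorem improved_branching_lemma
    {ι : Type*} [Fintype ι] [DecidableEq ι]
    (G : SimpleGraph ι) [DecidableRel G.Adj]
    (μ : ι → ℝ) (hμ : ∀ i, 0 < μ i)
    (x : ι → ℝ) (hx : ∀ i, x i = μ i / (μ i + 1))
    {W : Type*} [Fintype W] [DecidableEq W]
    (r : W) (p : W → W) (hroot : p r = r)
    (hreach : ∀ v : W, ∃ n : ℕ, p^[n] v = r)
    (hfix : ∀ v : W, p v = v → v = r)
    (ch : W → Finset W)
    (hch : ∀ u v : W, u ∈ ch v ↔ u ≠ r ∧ p u = v)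
    (ℓ : W → ι)
    (hdist : ∀ v : W, Set.InjOn ℓ (ch v : Set W))
    (hnbhd : ∀ v : W, ∀ u ∈ ch v, ℓ u ∈ insert (ℓ v) (G.neighborFinset (ℓ v)))
    (hindep : ∀ v : W, ∀ a ∈ (ch v).image ℓ, ∀ b ∈ (ch v).image ℓ, ¬ G.Adj a b) :
    ∏ v : W,
        (((∏ j ∈ (ch v).image ℓ, x j) *
            ∏ B ∈ (insert (ℓ v) (G.neighborFinset (ℓ v))) \ (ch v).image ℓ, (1 - x B)) /
          ∑ I ∈ (insert (ℓ v) (G.neighborFinset (ℓ v))).powerset.filter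
              (fun I => ∀ a ∈ I, ∀ b ∈ I, ¬ G.Adj a b),
            ((∏ j ∈ I, x j) *
              ∏ B ∈ (insert (ℓ v) (G.neighborFinset (ℓ v))) \ I, (1 - x B))) =
      (μ (ℓ r))⁻¹ *
        ∏ v : W,
          (μ (ℓ v) /
            ∑ I ∈ (insert (ℓ v) (G.neighborFinset (ℓ v))).powerset.filter
                (fun I => ∀ a ∈ I, ∀ b ∈ I, ¬ G.Adj a b),
              ∏ j ∈ I, μ j) := by
  classical
  set N : W → Finset ι := fun v => insert (ℓ v) (G.neighborFinset (ℓ v)) with hN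
  set F : W → Finset (Finset ι) := fun v =>
    (N v).powerset.filter (fun I => ∀ a ∈ I, ∀ b ∈ I, ¬ G.Adj a b) with hF
  set S : W → ℝ := fun v => ∑ I ∈ F v, ∏ j ∈ I, μ j with hS
  have hμne : ∀ j : ι, μ j + 1 ≠ 0 := fun j => by have := hμ j; linarith
  have hSpos : ∀ v, 0 < S v := by
    intro v
    apply Finset.sum_pos
    · intro I _; exact Finset.prod_pos fun j _ => hμ j
    · exact ⟨∅, by simp [hF]⟩
  have hPpos : ∀ v, 0 < ∏ B ∈ N v, (μ B + 1) :=
    fun v => Finset.prod_pos fun B _ => by have := hμ B; linarith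
  have hw : ∀ v : W, ∀ I : Finset ι, I ⊆ N v →
      (∏ j ∈ I, x j) * ∏ B ∈ N v \ I, (1 - x B)
        = (∏ j ∈ I, μ j) / ∏ B ∈ N v, (μ B + 1) := by
    intro v I hI
    calc (∏ j ∈ I, x j) * ∏ B ∈ N v \ I, (1 - x B)
        = (∏ j ∈ I, μ j / (μ j + 1)) * ∏ B ∈ N v \ I, (1 / (μ B + 1)) := by
          refine congrArg₂ (· * ·) (Finset.prod_congr rfl fun j _ => hx j)
            (Finset.prod_congr rfl fun B _ => ?_)
          have h := hμne B
          rw [hx B]; field_simp; ring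
      _ = ((∏ j ∈ I, μ j) / ∏ j ∈ I, (μ j + 1)) *
            ((∏ B ∈ N v \ I, (1:ℝ)) / ∏ B ∈ N v \ I, (μ B + 1)) := by
          rw [Finset.prod_div_distrib, Finset.prod_div_distrib]
      _ = (∏ j ∈ I, μ j) /
            ((∏ B ∈ N v \ I, (μ B + 1)) * ∏ j ∈ I, (μ j + 1)) := by
          rw [Finset.prod_const_one]; ring
      _ = (∏ j ∈ I, μ j) / ∏ B ∈ N v, (μ B + 1) := by rw [Finset.prod_sdiff hI]
  have hfac : ∀ v : W,
      (((∏ j ∈ (ch v).image ℓ, x j) * ∏ B ∈ N v \ (ch v).image ℓ, (1 - x B)) /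
        ∑ I ∈ F v, ((∏ j ∈ I, x j) * ∏ B ∈ N v \ I, (1 - x B)))
      = (∏ u ∈ ch v, μ (ℓ u)) / S v := by
    intro v
    have hJ : (ch v).image ℓ ⊆ N v := by
      intro j hj
      rcases Finset.mem_image.1 hj with ⟨u, hu, rfl⟩
      exact hnbhd v u hu
    have hden : (∑ I ∈ F v, ((∏ j ∈ I, x j) * ∏ B ∈ N v \ I, (1 - x B)))
        = S v / ∏ B ∈ N v, (μ B + 1) := by
      rw [hS, Finset.sum_div]
      refine Finset.sum_congr rfl fun I hI => ?_
      exact hw v I (Finset.mem_powerset.1 (Finset.mem_filter.1 hI).1)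
    rw [hden, hw v _ hJ, Finset.prod_image (fun a ha b hb => hdist v ha hb)]
    have hP := ne_of_gt (hPpos v)
    have hSne := ne_of_gt (hSpos v)
    field_simp
  have hnum : ∏ v : W, ∏ u ∈ ch v, μ (ℓ u) = (μ (ℓ r))⁻¹ * ∏ v : W, μ (ℓ v) := by
    have hchv : ∀ v : W, ch v = (Finset.univ.erase r).filter (fun u => p u = v) := by
      intro v; ext u
      simp [hch, Finset.mem_erase, and_comm]
    have h1 : ∏ v : W, ∏ u ∈ ch v, μ (ℓ u)
        = ∏ u ∈ Finset.univ.erase r, μ (ℓ u) := by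
      rw [show (fun v => ∏ u ∈ ch v, μ (ℓ u))
          = fun v => ∏ u ∈ (Finset.univ.erase r).filter (fun u => p u = v), μ (ℓ u)
          from funext fun v => by rw [hchv v]] at *
      exact Finset.prod_fiberwise_of_maps_to (fun u _ => Finset.mem_univ (p u)) _
    rw [h1, eq_inv_mul_iff_mul_eq₀ (ne_of_gt (hμ (ℓ r)))]
    exact Finset.mul_prod_erase Finset.univ (fun v => μ (ℓ v)) (Finset.mem_univ r)
  calc ∏ v : W,
        (((∏ j ∈ (ch v).image ℓ, x j) * ∏ B ∈ N v \ (ch v).image ℓ, (1 - x B)) /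
          ∑ I ∈ F v, ((∏ j ∈ I, x j) * ∏ B ∈ N v \ I, (1 - x B)))
      = ∏ v : W, (∏ u ∈ ch v, μ (ℓ u)) / S v := Finset.prod_congr rfl fun v _ => hfac v
    _ = (∏ v : W, ∏ u ∈ ch v, μ (ℓ u)) / ∏ v : W, S v := by
        rw [Finset.prod_div_distrib]
    _ = ((μ (ℓ r))⁻¹ * ∏ v : W, μ (ℓ v)) / ∏ v : W, S v := by rw [hnum]
    _ = (μ (ℓ r))⁻¹ * ∏ v : W, (μ (ℓ v) / S v) := by
        rw [Finset.prod_div_distrib, mul_div_assoc]
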